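/- Let v be an additive valuation on a finite set M such that for some reals a > b ≥ 0 with b dividing a (i.e., a = k·b for a positive integer k, or b = 0), every item g satisfies v({g}) ∈ {a, b}. Then for any two disjoint bundles X_i and X_j, if v(X_i) ≥ v(X_j) − b, then v(X_i) ≥ μ(X_i ∪ X_j), where μ(S) = max over partitions (A,B) of S of min(v(A), v(B)). -/

import Mathlib

open Finset

/-- Additive valuation induced by real item values. -/
def addVal {α : Type*} (w : α → ℝ) (S : Finset α) : ℝ := ∑ g ∈ S, w g

/-- Two-part maximin share: max over partitions (A, S \ A) of S of the min value. -/
noncomputable def mu {α : Type*} [DecidableEq α] (v : Finset α → ℝ) (S : Finset α) : ℝ :=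
  S.powerset.sup' ⟨∅, Finset.empty_mem_powerset S⟩ fun A => min (v A) (v (S \ A))

lemma addVal_mult {α : Type*} [DecidableEq α] (b : ℝ) (k : ℕ) (w : α → ℝ)
    (hw : ∀ g, w g = k * b ∨ w g = b) (T : Finset α) :
    ∃ n : ℕ, addVal w T = n * b := by
  classical
  induction T using Finset.induction_on with
  | empty => exact ⟨0, by simp [addVal]⟩
  | insert _ _ hg ih =>
    obtain ⟨n, hn⟩ := ih
    rcases hw ‹_› with h | h
    · refine ⟨k + n, ?_⟩
      unfold addVal at hn ⊢
      rw [Finset.sum_insert hg, h, hn]; push_cast; ring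
    · refine ⟨1 + n, ?_⟩
      unfold addVal at hn ⊢
      rw [Finset.sum_insert hg, h, hn]; push_cast; ring

theorem stmt1 {α : Type*} [DecidableEq α] (a b : ℝ) (hab : b < a) (hb : 0 ≤ b)
    (hfac : (∃ k : ℕ, 0 < k ∧ a = k * b) ∨ b = 0)
    (w : α → ℝ) (hw : ∀ g, w g = a ∨ w g = b)
    (Xi Xj : Finset α) (hdisj : Disjoint Xi Xj)
    (h : addVal w Xi ≥ addVal w Xj - b) :
    addVal w Xi ≥ mu (addVal w) (Xi ∪ Xj) := by
  classical
  set S := Xi ∪ Xj with hS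
  unfold mu
  apply Finset.sup'_le
  intro A hA
  rw [Finset.mem_powerset] at hA
  have hsplit : addVal w A + addVal w (S \ A) = addVal w Xi + addVal w Xj := by
    have h1 : addVal w A + addVal w (S \ A) = addVal w S := by
      unfold addVal
      rw [← Finset.sum_union disjoint_sdiff, Finset.union_sdiff_of_subset hA]
    rw [h1]
    unfold addVal
    exact Finset.sum_union hdisj
  have hmin2 : 2 * min (addVal w A) (addVal w (S \ A)) ≤ addVal w A + addVal w (S \ A) := by
    rcases min_le_iff.mpr (Or.inl (le_refl (addVal w A))) with _
    rcases le_total (addVal w A) (addVal w (S \ A)) with h' | h'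
    · rw [min_eq_left h']; linarith
    · rw [min_eq_right h']; linarith
  have hkey : min (addVal w A) (addVal w (S \ A)) ≤ addVal w Xi + b / 2 := by linarith
  rcases hfac with ⟨k, hk, ha⟩ | hb0
  · rcases eq_or_lt_of_le hb with hb0 | hbpos
    · linarith
    · have hw' : ∀ g, w g = k * b ∨ w g = b := by
        intro g; rcases hw g with hg | hg
        · exact Or.inl (hg.trans ha)
        · exact Or.inr hg
      obtain ⟨nA, hnA⟩ := addVal_mult b k w hw' A
      obtain ⟨nB, hnB⟩ := addVal_mult b k w hw' (S \ A)
      obtain ⟨nI, hnI⟩ := addVal_mult b k w hw' Xi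
      have hmineq : min (addVal w A) (addVal w (S \ A)) = ((min nA nB : ℕ) : ℝ) * b := by
        rw [hnA, hnB]
        rcases le_total nA nB with h' | h'
        · rw [min_eq_left (mul_le_mul_of_nonneg_right (Nat.cast_le.mpr h') hb),
            min_eq_left h']
        · rw [min_eq_right (mul_le_mul_of_nonneg_right (Nat.cast_le.mpr h') hb),
            min_eq_right h']
      rw [hmineq] at hkey ⊢
      rw [hnI] at hkey ⊢
      have hle : min nA nB ≤ nI := by
        by_contra hc
        push_neg at hc
        have : (nI : ℝ) + 1 ≤ ((min nA nB : ℕ) : ℝ) := by exact_mod_cast hc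
        nlinarith
      exact mul_le_mul_of_nonneg_right (by exact_mod_cast hle) hb
  · rw [hb0] at hkey; linarith
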